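/- Let (Ω, μ) be a measure space, Ψ : Ω → ℝ a measurable function, and C ≥ 0 a constant. Suppose (w_m)_{m ∈ ℕ} is a sequence in L²(μ; ℂ) such that ∫_Ω e^{m·Ψ(x)} |w_m(x)|² dμ(x) ≤ C for every m, and suppose w_m converges weakly in L²(μ; ℂ) to some w, i.e. ⟨w_m, g⟩_{L²} → ⟨w, g⟩_{L²} for every g ∈ L²(μ; ℂ). Then w = 0 μ-almost everywhere on the set {x ∈ Ω : Ψ(x) > 0}. -/

import Mathlib

open MeasureTheory Filter ENNReal

lemma aux_step {Ω : Type*} [MeasurableSpace Ω] (μ : Measure Ω)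
    (Ψ : Ω → ℝ) (hΨ : Measurable Ψ) (C : ℝ) (hC : 0 ≤ C)
    (w : ℕ → Ω → ℂ) (wlim : Ω → ℂ)
    (hw : ∀ m, MemLp (w m) 2 μ) (hwlim : MemLp wlim 2 μ)
    (hbound : ∀ m : ℕ,
      ∫⁻ x, ENNReal.ofReal (Real.exp (m * Ψ x)) * (‖w m x‖₊ : ℝ≥0∞) ^ 2 ∂μ
        ≤ ENNReal.ofReal C)
    (hweak : ∀ g : Ω → ℂ, MemLp g 2 μ →
      Tendsto (fun m => ∫ x, w m x * (starRingEnd ℂ) (g x) ∂μ) atTop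
        (nhds (∫ x, wlim x * (starRingEnd ℂ) (g x) ∂μ)))
    {ε : ℝ} (hε : 0 < ε) :
    ∀ᵐ x ∂μ, ε ≤ Ψ x → wlim x = 0 := by
  set A : Set Ω := {x | ε ≤ Ψ x} with hA_def
  have hA : MeasurableSet A := measurableSet_le measurable_const hΨ
  set g : Ω → ℂ := A.indicator wlim with hg_def
  have hg : MemLp g 2 μ := hwlim.indicator hA
  -- finiteness of ∫⁻ ‖wlim‖₊^2
  have hK : (∫⁻ x, (‖wlim x‖₊ : ℝ≥0∞) ^ (2 : ℝ) ∂μ) < ⊤ := by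
    have := lintegral_rpow_enorm_lt_top_of_eLpNorm_lt_top (f := wlim) (p := 2)
      (by norm_num) (by norm_num) hwlim.2
    simp at this ⊢; exact this
  set K : ℝ≥0∞ := (∫⁻ x, (‖wlim x‖₊ : ℝ≥0∞) ^ (2 : ℝ) ∂μ) ^ (1/2 : ℝ) with hK_def
  have hKne : K ≠ ⊤ := by
    simp only [hK_def]
    exact (ENNReal.rpow_lt_top_of_nonneg (by norm_num) hK.ne).ne
  -- bound on restricted square integral
  have hres : ∀ m : ℕ, (∫⁻ x in A, (‖w m x‖₊ : ℝ≥0∞) ^ (2 : ℝ) ∂μ)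
      ≤ ENNReal.ofReal (C * Real.exp (-(m * ε))) := by
    intro m
    have h1 : ENNReal.ofReal (Real.exp (m * ε)) * ∫⁻ x in A, (‖w m x‖₊ : ℝ≥0∞) ^ (2 : ℝ) ∂μ
        ≤ ENNReal.ofReal C := by
      rw [← lintegral_const_mul' _ _ (by simp)]
      refine le_trans ?_ (hbound m)
      rw [← lintegral_indicator hA]
      refine lintegral_mono fun x => ?_
      by_cases hx : x ∈ A
      · simp only [Set.indicator_of_mem hx]
        rw [show ((‖w m x‖₊ : ℝ≥0∞) ^ (2:ℝ)) = (‖w m x‖₊ : ℝ≥0∞) ^ (2:ℕ) by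
          rw [← ENNReal.rpow_natCast]; norm_num]
        exact mul_le_mul_left (ENNReal.ofReal_le_ofReal (Real.exp_le_exp.2
          (mul_le_mul_of_nonneg_left hx (Nat.cast_nonneg m)))) _
      · simp [Set.indicator_of_notMem hx]
    calc (∫⁻ x in A, (‖w m x‖₊ : ℝ≥0∞) ^ (2 : ℝ) ∂μ)
        = ENNReal.ofReal (Real.exp (-(m * ε))) *
          (ENNReal.ofReal (Real.exp (m * ε)) * ∫⁻ x in A, (‖w m x‖₊ : ℝ≥0∞) ^ (2 : ℝ) ∂μ) := by
          rw [← mul_assoc, ← ENNReal.ofReal_mul (Real.exp_nonneg _), ← Real.exp_add]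
          simp
      _ ≤ ENNReal.ofReal (Real.exp (-(m * ε))) * ENNReal.ofReal C := by gcongr
      _ = ENNReal.ofReal (C * Real.exp (-(m * ε))) := by
          rw [← ENNReal.ofReal_mul (Real.exp_nonneg _), mul_comm]
  -- the integrals against g tend to 0
  have hI0 : Tendsto (fun m => ∫ x, w m x * (starRingEnd ℂ) (g x) ∂μ) atTop (nhds 0) := by
    rw [show (0 : ℂ) = 0 from rfl]
    have hbnd : ∀ m : ℕ, ‖∫ x, w m x * (starRingEnd ℂ) (g x) ∂μ‖
        ≤ Real.sqrt (C * Real.exp (-(m * ε))) * K.toReal := by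
      intro m
      refine le_trans (norm_integral_le_lintegral_norm _) ?_
      have hJ : (∫⁻ x, ENNReal.ofReal ‖w m x * (starRingEnd ℂ) (g x)‖ ∂μ)
          ≤ ENNReal.ofReal (C * Real.exp (-(m * ε))) ^ (1/2 : ℝ) * K := by
        have heq : (∫⁻ x, ENNReal.ofReal ‖w m x * (starRingEnd ℂ) (g x)‖ ∂μ)
            = ∫⁻ x in A, (‖w m x‖₊ : ℝ≥0∞) * (‖wlim x‖₊ : ℝ≥0∞) ∂μ := by
          rw [← lintegral_indicator hA]
          refine lintegral_congr fun x => ?_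
          by_cases hx : x ∈ A
          · simp only [hg_def, Set.indicator_of_mem hx, norm_mul, RCLike.norm_conj]
            rw [ENNReal.ofReal_mul (norm_nonneg _), ofReal_norm,
              ofReal_norm, enorm_eq_nnnorm, enorm_eq_nnnorm]
          · simp [hg_def, Set.indicator_of_notMem hx]
        rw [heq]
        calc (∫⁻ x in A, (‖w m x‖₊ : ℝ≥0∞) * (‖wlim x‖₊ : ℝ≥0∞) ∂μ)
            ≤ (∫⁻ x in A, (‖w m x‖₊ : ℝ≥0∞) ^ (2:ℝ) ∂μ) ^ (1/2 : ℝ) *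
              (∫⁻ x in A, (‖wlim x‖₊ : ℝ≥0∞) ^ (2:ℝ) ∂μ) ^ (1/2 : ℝ) :=
              ENNReal.lintegral_mul_le_Lp_mul_Lq _ (Real.holderConjugate_iff_eq_conjExponent
                (by norm_num) |>.2 (by norm_num))
                ((hw m).aestronglyMeasurable.enorm.restrict)
                (hwlim.aestronglyMeasurable.enorm.restrict)
          _ ≤ ENNReal.ofReal (C * Real.exp (-(m * ε))) ^ (1/2 : ℝ) * K := by
              gcongr
              · exact hres m
              · exact ENNReal.rpow_le_rpow (setLIntegral_le_lintegral _ _) (by norm_num)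
      have hfin : ENNReal.ofReal (C * Real.exp (-(m * ε))) ^ (1/2 : ℝ) * K ≠ ⊤ :=
        ENNReal.mul_ne_top (ENNReal.rpow_lt_top_of_nonneg (by norm_num) ENNReal.ofReal_ne_top).ne
          hKne
      calc (∫⁻ x, ENNReal.ofReal ‖w m x * (starRingEnd ℂ) (g x)‖ ∂μ).toReal
          ≤ (ENNReal.ofReal (C * Real.exp (-(m * ε))) ^ (1/2 : ℝ) * K).toReal :=
            ENNReal.toReal_mono hfin hJ
        _ = Real.sqrt (C * Real.exp (-(m * ε))) * K.toReal := by
            rw [ENNReal.toReal_mul, ← ENNReal.toReal_rpow, ENNReal.toReal_ofReal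
              (mul_nonneg hC (Real.exp_nonneg _)), Real.sqrt_eq_rpow]
    have hb0 : Tendsto (fun m : ℕ => Real.sqrt (C * Real.exp (-(m * ε))) * K.toReal)
        atTop (nhds 0) := by
      have h1 : Tendsto (fun m : ℕ => C * Real.exp (-(m * ε))) atTop (nhds 0) := by
        rw [show (0:ℝ) = C * 0 by ring]
        exact (Real.tendsto_exp_atBot.comp (by
          apply tendsto_neg_atBot_iff.2
          exact Tendsto.atTop_mul_const hε tendsto_natCast_atTop_atTop)).const_mul C
      have h2 : Tendsto (fun m : ℕ => Real.sqrt (C * Real.exp (-(m * ε)))) atTop (nhds 0) := by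
        rw [show (0:ℝ) = Real.sqrt 0 by simp]
        exact (Real.continuous_sqrt.tendsto 0).comp h1
      simpa using h2.mul_const K.toReal
    exact squeeze_zero_norm hbnd hb0
  have hL : (∫ x, wlim x * (starRingEnd ℂ) (g x) ∂μ) = 0 :=
    tendsto_nhds_unique (hweak g hg) hI0
  -- rewrite L as a real integral of normSq over A
  have hLre : (∫ x in A, Complex.normSq (wlim x) ∂μ) = 0 := by
    have : (∫ x, wlim x * (starRingEnd ℂ) (g x) ∂μ)
        = ((∫ x in A, Complex.normSq (wlim x) ∂μ : ℝ) : ℂ) := by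
      have hcast : ∀ r : ℝ, (RCLike.ofReal r : ℂ) = (r : ℂ) := fun r => rfl
      rw [← hcast, ← integral_ofReal, ← integral_indicator hA]
      refine integral_congr_ae (Filter.Eventually.of_forall fun x => ?_)
      by_cases hx : x ∈ A
      · simp [hg_def, Set.indicator_of_mem hx, Complex.mul_conj, hcast]
      · simp [hg_def, Set.indicator_of_notMem hx, hcast]
    rw [this] at hL
    exact_mod_cast hL
  have hint : Integrable (fun x => Complex.normSq (wlim x)) (μ.restrict A) := by
    have : Integrable (fun x => ‖wlim x‖ ^ 2) μ := hwlim.norm.integrable_sq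
    refine (this.restrict (s := A)).congr (Filter.Eventually.of_forall fun x => ?_)
    simp [Complex.sq_norm]
  have hae : ∀ᵐ x ∂(μ.restrict A), Complex.normSq (wlim x) = 0 := by
    have := (integral_eq_zero_iff_of_nonneg (fun x => Complex.normSq_nonneg _) hint).1 hLre
    filter_upwards [this] with x hx
    simpa using hx
  have hae2 : ∀ᵐ x ∂(μ.restrict A), wlim x = 0 := by
    filter_upwards [hae] with x hx
    exact Complex.normSq_eq_zero.1 hx
  rw [ae_restrict_iff' hA] at hae2
  exact hae2

/-- The measure-theoretic step in the proof of the Approximation Lemma 4.7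
of the paper: if `∫ e^{mΨ} |w_m|² dμ ≤ C` for all `m` and `w_m → w` weakly in
`L²(μ)`, then `w = 0` a.e. on the set `{Ψ > 0}`. -/
theorem stmt_3 {Ω : Type*} [MeasurableSpace Ω] (μ : Measure Ω)
    (Ψ : Ω → ℝ) (hΨ : Measurable Ψ) (C : ℝ) (hC : 0 ≤ C)
    (w : ℕ → Ω → ℂ) (wlim : Ω → ℂ)
    (hw : ∀ m, MemLp (w m) 2 μ) (hwlim : MemLp wlim 2 μ)
    (hbound : ∀ m : ℕ,
      ∫⁻ x, ENNReal.ofReal (Real.exp (m * Ψ x)) * (‖w m x‖₊ : ℝ≥0∞) ^ 2 ∂μ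
        ≤ ENNReal.ofReal C)
    (hweak : ∀ g : Ω → ℂ, MemLp g 2 μ →
      Tendsto (fun m => ∫ x, w m x * (starRingEnd ℂ) (g x) ∂μ) atTop
        (nhds (∫ x, wlim x * (starRingEnd ℂ) (g x) ∂μ))) :
    ∀ᵐ x ∂μ, 0 < Ψ x → wlim x = 0 := by
  have H : ∀ n : ℕ, ∀ᵐ x ∂μ, (1 / (n + 1 : ℝ)) ≤ Ψ x → wlim x = 0 := fun n =>
    aux_step μ Ψ hΨ C hC w wlim hw hwlim hbound hweak (by positivity)
  rw [← ae_all_iff] at H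
  filter_upwards [H] with x hx hpos
  obtain ⟨n, hn⟩ := exists_nat_one_div_lt hpos
  exact hx n hn.le
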